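/- Let σ = Σ_{i=1}^{r'} ω_i e_{ξ_i} with pairwise distinct ξ_i and nonzero ω_i ∈ ℂ[y]. Then the points ξ₁,…,ξ_{r'} are exactly the common roots of the polynomials in I_σ = ker H_σ = { p ∈ ℂ[x] : ∀q, ⟨σ | pq⟩ = 0 }, i.e. V(I_σ) = {ξ₁,…,ξ_{r'}}. -/

import Mathlib

noncomputable def Hankel (n : ℕ) (σ : Module.Dual ℂ (MvPolynomial (Fin n) ℂ)) :
    MvPolynomial (Fin n) ℂ →ₗ[ℂ] Module.Dual ℂ (MvPolynomial (Fin n) ℂ) :=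
  (LinearMap.llcomp ℂ (MvPolynomial (Fin n) ℂ) (MvPolynomial (Fin n) ℂ) ℂ σ).comp
    (LinearMap.mul ℂ (MvPolynomial (Fin n) ℂ))

/-- The differential operator `∂^β = ∂₁^{β₁} ⋯ ∂ₙ^{βₙ}` on `ℂ[x₁,…,xₙ]`. -/
noncomputable def pderivPow (n : ℕ) (β : Fin n →₀ ℕ) :
    Module.End ℂ (MvPolynomial (Fin n) ℂ) :=
  (List.ofFn fun i : Fin n =>
    ((MvPolynomial.pderiv i).toLinearMap :
        Module.End ℂ (MvPolynomial (Fin n) ℂ)) ^ (β i)).prod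

/-- The polynomial-exponential series `ω(y) e_ξ(y)` viewed as the linear functional
`p ↦ Σ_β ω_β (∂^β p)(ξ)` on `ℂ[x]` (its moments are `⟨ω e_ξ | x^α⟩`). -/
noncomputable def polyExp (n : ℕ) (ω : MvPolynomial (Fin n) ℂ) (ξ : Fin n → ℂ) :
    Module.Dual ℂ (MvPolynomial (Fin n) ℂ) :=
  ∑ β ∈ ω.support, MvPolynomial.coeff β ω •
    ((MvPolynomial.aeval ξ).toLinearMap ∘ₗ pderivPow n β)

/-- `μ(ω)`: the dimension of the space spanned by `ω` and all its partial
derivatives of all orders. -/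
noncomputable def mu (n : ℕ) (ω : MvPolynomial (Fin n) ℂ) : ℕ :=
  Module.finrank ℂ
    ↥(Submodule.span ℂ (Set.range fun β : Fin n →₀ ℕ => pderivPow n β ω))


open MvPolynomial

namespace Stmt16Aux

variable {n : ℕ}

/-- translation `p(x) ↦ p(x+ξ)` -/
noncomputable def Tr (n : ℕ) (ξ : Fin n → ℂ) :
    MvPolynomial (Fin n) ℂ →ₐ[ℂ] MvPolynomial (Fin n) ℂ :=
  aeval fun i => X i + C (ξ i)

lemma Tr_X_sub_C (ξ : Fin n → ℂ) (k : Fin n) :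
    Tr n ξ (X k - C (ξ k)) = X k := by
  simp [Tr]

lemma aeval_zero_Tr (ξ : Fin n → ℂ) (p : MvPolynomial (Fin n) ℂ) :
    aeval (0 : Fin n → ℂ) (Tr n ξ p) = aeval ξ p := by
  rw [Tr, ← AlgHom.comp_apply, comp_aeval]
  simp

lemma pderiv_Tr (ξ : Fin n → ℂ) (k : Fin n) (p : MvPolynomial (Fin n) ℂ) :
    pderiv k (Tr n ξ p) = Tr n ξ (pderiv k p) := by
  induction p using MvPolynomial.induction_on with
  | C a => simp [Tr]
  | add p q hp hq => simp [map_add, hp, hq]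
  | mul_X p i hp =>
      have hX : Tr n ξ (X i) = X i + C (ξ i) := aeval_X _ i
      have h2 : pderiv k (X i + C (ξ i)) = Tr n ξ (pderiv k (X i)) := by
        by_cases h : i = k
        · subst h; simp [pderiv_X_self]
        · simp [pderiv_X_of_ne h]
      rw [map_mul, hX, pderiv_mul, hp, h2, pderiv_mul, map_add, map_mul, hX]
      rw [map_mul]

lemma pderiv_pow_Tr (ξ : Fin n → ℂ) (k : Fin n) (m : ℕ) (p : MvPolynomial (Fin n) ℂ) :
    (((pderiv k).toLinearMap : Module.End ℂ (MvPolynomial (Fin n) ℂ)) ^ m) (Tr n ξ p)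
      = Tr n ξ ((((pderiv k).toLinearMap : Module.End ℂ (MvPolynomial (Fin n) ℂ)) ^ m) p) := by
  induction m with
  | zero => simp
  | succ m ih =>
      rw [pow_succ', Module.End.mul_apply, Module.End.mul_apply]
      show pderiv k _ = _
      rw [ih, pderiv_Tr]
      rfl

lemma listprod_Tr (ξ : Fin n → ℂ) (β : Fin n →₀ ℕ) (l : List (Fin n))
    (p : MvPolynomial (Fin n) ℂ) :
    ((l.map fun i => ((pderiv i).toLinearMap :
        Module.End ℂ (MvPolynomial (Fin n) ℂ)) ^ (β i)).prod) (Tr n ξ p)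
      = Tr n ξ (((l.map fun i => ((pderiv i).toLinearMap :
        Module.End ℂ (MvPolynomial (Fin n) ℂ)) ^ (β i)).prod) p) := by
  induction l generalizing p with
  | nil => simp
  | cons i t ih =>
      simp only [List.map_cons, List.prod_cons, Module.End.mul_apply, ih, pderiv_pow_Tr]

lemma pderivPow_Tr (ξ : Fin n → ℂ) (β : Fin n →₀ ℕ) (p : MvPolynomial (Fin n) ℂ) :
    pderivPow n β (Tr n ξ p) = Tr n ξ (pderivPow n β p) := by
  rw [pderivPow, List.ofFn_eq_map]
  exact listprod_Tr ξ β _ p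

lemma pderiv_pow_monomial (k : Fin n) (m : ℕ) (s : Fin n →₀ ℕ) (a : ℂ) :
    (((pderiv k).toLinearMap : Module.End ℂ (MvPolynomial (Fin n) ℂ)) ^ m) (monomial s a)
      = monomial (s - Finsupp.single k m) (a * ((s k).descFactorial m : ℂ)) := by
  induction m with
  | zero => simp
  | succ m ih =>
      rw [pow_succ', Module.End.mul_apply, ih]
      show pderiv k _ = _
      rw [pderiv_monomial]
      have h1 : s - Finsupp.single k m - Finsupp.single k 1 = s - Finsupp.single k (m + 1) := by
        rw [tsub_tsub, ← Finsupp.single_add]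
      have h2 : (s - Finsupp.single k m) k = s k - m := by
        simp [Finsupp.tsub_apply]
      rw [h1, h2, Nat.descFactorial_succ]
      congr 1
      push_cast
      ring

lemma single_listsum_apply (β : Fin n →₀ ℕ) (t : List (Fin n)) (i : Fin n) (hi : i ∉ t) :
    ((t.map fun j => Finsupp.single j (β j)).sum) i = 0 := by
  induction t with
  | nil => simp
  | cons j u ihu =>
      simp only [List.map_cons, List.sum_cons, Finsupp.add_apply]
      rw [Finsupp.single_apply_eq_zero.mpr (fun h => absurd h.symm ?_), ihu ?_, add_zero]
      · intro hm; exact hi (List.mem_cons_of_mem _ hm)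
      · intro hj; exact hi (hj ▸ List.mem_cons_self)

lemma listprod_monomial (β : Fin n →₀ ℕ) (l : List (Fin n)) (hl : l.Nodup)
    (s : Fin n →₀ ℕ) (a : ℂ) :
    ((l.map fun i => ((pderiv i).toLinearMap :
        Module.End ℂ (MvPolynomial (Fin n) ℂ)) ^ (β i)).prod) (monomial s a)
      = monomial (s - (l.map fun i => Finsupp.single i (β i)).sum)
          (a * (l.map fun i => ((s i).descFactorial (β i) : ℂ)).prod) := by
  induction l with
  | nil => simp
  | cons i t ih =>
      have hi : i ∉ t := (List.nodup_cons.mp hl).1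
      have ht : t.Nodup := (List.nodup_cons.mp hl).2
      simp only [List.map_cons, List.prod_cons, List.sum_cons, Module.End.mul_apply, ih ht]
      rw [pderiv_pow_monomial]
      have hst : (s - (t.map fun j => Finsupp.single j (β j)).sum) i = s i := by
        rw [Finsupp.tsub_apply, single_listsum_apply β t i hi, Nat.sub_zero]
      rw [hst, tsub_tsub, add_comm (Finsupp.single i (β i))]
      ring_nf

lemma pderivPow_monomial (β : Fin n →₀ ℕ) (s : Fin n →₀ ℕ) (a : ℂ) :
    pderivPow n β (monomial s a)
      = monomial (s - β) (a * ∏ i, ((s i).descFactorial (β i) : ℂ)) := by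
  rw [pderivPow, List.ofFn_eq_map, listprod_monomial β _ (List.nodup_finRange n)]
  have h1 : ((List.finRange n).map fun i => Finsupp.single i (β i)).sum = β := by
    rw [← List.ofFn_eq_map, List.sum_ofFn, Finsupp.univ_sum_single]
  have h2 : ((List.finRange n).map fun i => ((s i).descFactorial (β i) : ℂ)).prod
      = ∏ i, ((s i).descFactorial (β i) : ℂ) := by
    rw [← List.ofFn_eq_map, List.prod_ofFn]
  rw [h1, h2]

lemma aeval_zero_pderivPow (β : Fin n →₀ ℕ) (p : MvPolynomial (Fin n) ℂ) :
    aeval (0 : Fin n → ℂ) (pderivPow n β p)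
      = (∏ i, ((β i).factorial : ℂ)) * coeff β p := by
  induction p using MvPolynomial.induction_on' with
  | monomial s a =>
      rw [pderivPow_monomial, coeff_monomial]
      by_cases hs : s = β
      · subst hs
        have h0 : s - s = 0 := by simp
        rw [h0, if_pos rfl]
        simp [Nat.descFactorial_self, mul_comm]
      · rw [if_neg hs]
        by_cases hle : β ≤ s
        · have hne : s - β ≠ 0 := by
            intro h
            exact hs (le_antisymm (tsub_eq_zero_iff_le.mp h) hle)
          rw [aeval_monomial]
          obtain ⟨j, hj⟩ : ∃ j, (s - β) j ≠ 0 := by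
            by_contra hc
            push_neg at hc
            exact hne (Finsupp.ext fun j => hc j)
          rw [Finsupp.prod, Finset.prod_eq_zero (Finsupp.mem_support_iff.mpr hj)]
          · ring
          · exact zero_pow hj
        · obtain ⟨j, hj⟩ : ∃ j, s j < β j := by
            by_contra hc
            push_neg at hc
            exact hle fun j => hc j
          have : ((s j).descFactorial (β j) : ℂ) = 0 := by
            rw [Nat.descFactorial_eq_zero_iff_lt.mpr hj]; simp
          rw [Finset.prod_eq_zero (Finset.mem_univ j) this]
          simp
  | add p q hp hq =>
      rw [map_add, map_add, coeff_add, hp, hq]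
      ring

lemma polyExp_apply (ω : MvPolynomial (Fin n) ℂ) (ξ : Fin n → ℂ)
    (p : MvPolynomial (Fin n) ℂ) :
    polyExp n ω ξ p = ∑ β ∈ ω.support,
      coeff β ω * ((∏ i, ((β i).factorial : ℂ)) * coeff β (Tr n ξ p)) := by
  rw [polyExp, LinearMap.sum_apply]
  refine Finset.sum_congr rfl fun β _ => ?_
  rw [LinearMap.smul_apply, LinearMap.comp_apply, smul_eq_mul]
  congr 1
  show aeval ξ (pderivPow n β p) = _
  rw [← aeval_zero_Tr ξ, ← pderivPow_Tr, aeval_zero_pderivPow]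

/-- If all the low-order coefficients of the translate of `P` vanish, then
`polyExp ω ξ P = 0`. -/
lemma polyExp_eq_zero (ω : MvPolynomial (Fin n) ℂ) (ξ : Fin n → ℂ)
    (P : MvPolynomial (Fin n) ℂ)
    (h : ∀ α : Fin n →₀ ℕ, (α.sum fun _ e => e) ≤ ω.totalDegree →
      coeff α (Tr n ξ P) = 0) :
    polyExp n ω ξ P = 0 := by
  rw [polyExp_apply]
  refine Finset.sum_eq_zero fun β hβ => ?_
  rw [h β (le_totalDegree hβ)]
  ring

lemma coeff_blocker (ξ : Fin n → ℂ) (k : Fin n) (E : ℕ) (h : MvPolynomial (Fin n) ℂ)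
    (α : Fin n →₀ ℕ) (hα : (α.sum fun _ e => e) < E) :
    coeff α (Tr n ξ ((X k - C (ξ k)) ^ E * h)) = 0 := by
  rw [map_mul, map_pow, Tr_X_sub_C, X_pow_eq_monomial, mul_comm, coeff_mul_monomial']
  rw [if_neg]
  intro hle
  have h1 : E ≤ α k := by
    have := Finsupp.single_le_iff.mp hle
    exact this
  have h2 : α k ≤ α.sum fun _ e => e := by
    by_cases hk : k ∈ α.support
    · exact Finset.single_le_sum (fun _ _ => Nat.zero_le _) hk
    · simp [Finsupp.notMem_support_iff.mp hk]
  omega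

lemma prod_X_pow_univ (β : Fin n →₀ ℕ) :
    (∏ k, (X k : MvPolynomial (Fin n) ℂ) ^ β k) = monomial β 1 := by
  rw [← prod_X_pow_eq_monomial]
  symm
  apply Finset.prod_subset (Finset.subset_univ _)
  intro k _ hk
  rw [Finsupp.notMem_support_iff.mp hk, pow_zero]

lemma extraction (ω : MvPolynomial (Fin n) ℂ) (ξ : Fin n → ℂ) (hω : ω ≠ 0)
    (g : MvPolynomial (Fin n) ℂ)
    (h : ∀ v, polyExp n ω ξ (g * v) = 0) : eval ξ g = 0 := by
  obtain ⟨β₀, hβ₀, hmax⟩ := Set.Finite.exists_maximalFor id (↑ω.support : Set (Fin n →₀ ℕ))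
    (ω.support.finite_toSet) (by exact_mod_cast support_nonempty.mpr hω)
  have hβ₀' : β₀ ∈ ω.support := hβ₀
  have hv := h (∏ k, (X k - C (ξ k)) ^ β₀ k)
  rw [polyExp_apply, map_mul] at hv
  have hTv : Tr n ξ (∏ k, (X k - C (ξ k)) ^ β₀ k) = monomial β₀ 1 := by
    rw [map_prod, ← prod_X_pow_univ]
    exact Finset.prod_congr rfl fun k _ => by rw [map_pow, Tr_X_sub_C]
  rw [hTv] at hv
  rw [Finset.sum_eq_single β₀] at hv
  · rw [coeff_mul_monomial', if_pos le_rfl] at hv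
    simp only [tsub_self, mul_one] at hv
    have hc : coeff 0 (Tr n ξ g) = 0 := by
      have h1 : coeff β₀ ω ≠ 0 := mem_support_iff.mp hβ₀'
      have h2 : (∏ i, ((β₀ i).factorial : ℂ)) ≠ 0 := by
        apply Finset.prod_ne_zero_iff.mpr
        intro i _
        exact_mod_cast Nat.cast_ne_zero.mpr (Nat.factorial_ne_zero _)
      rcases mul_eq_zero.mp hv with h' | h'
      · exact absurd h' h1
      rcases mul_eq_zero.mp h' with h'' | h''
      · exact absurd h'' h2
      exact h'' 
    have h3 := aeval_zero_Tr ξ g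
    rw [aeval_zero, Algebra.algebraMap_self, RingHom.id_apply, constantCoeff_eq, hc] at h3
    have h4 : aeval ξ g = eval ξ g := by
      rw [← coe_aeval_eq_eval]; rfl
    rw [← h4, ← h3]
  · intro β hβ hne
    rw [coeff_mul_monomial']
    rw [if_neg, mul_zero, mul_zero]
    intro hle
    exact hne (le_antisymm (hmax hβ hle) hle)
  · intro hβ; exact (hβ hβ₀').elim

end Stmt16Aux

/-- The ideal `I_σ = ker H_σ = { p : ∀ q, ⟨σ | p q⟩ = 0 }`. -/
noncomputable def Iσ (n : ℕ) (σ : Module.Dual ℂ (MvPolynomial (Fin n) ℂ)) :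
    Ideal (MvPolynomial (Fin n) ℂ) where
  carrier := {p | ∀ q, σ (p * q) = 0}
  add_mem' := by
    intro a b ha hb q
    rw [add_mul, map_add, ha q, hb q, add_zero]
  zero_mem' := by intro q; rw [zero_mul, map_zero]
  smul_mem' := by
    intro c p hp q
    have := hp (c * q)
    rw [smul_eq_mul, show c * p * q = p * (c * q) by ring]
    exact this

open Stmt16Aux MvPolynomial in
/-- For `σ = Σᵢ ωᵢ e_{ξᵢ}` with pairwise distinct `ξᵢ` and nonzero `ωᵢ`, the
points `ξ₁,…,ξ_{r'}` are exactly the common roots of the polynomials of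
`I_σ = ker H_σ`: `V(I_σ) = {ξ₁,…,ξ_{r'}}`. -/
theorem stmt16 (n r' : ℕ)
    (ω : Fin r' → MvPolynomial (Fin n) ℂ) (hω : ∀ i, ω i ≠ 0)
    (ξ : Fin r' → (Fin n → ℂ)) (hξ : Function.Injective ξ) :
    {x : Fin n → ℂ |
        ∀ p ∈ Iσ n (∑ i, polyExp n (ω i) (ξ i)), MvPolynomial.eval x p = 0}
      = Set.range ξ := by
  classical
  apply Set.eq_of_subset_of_subset
  · -- V(I) ⊆ range ξ
    intro x hx
    by_contra hxr
    have hne : ∀ j, x ≠ ξ j := fun j hj => hxr ⟨j, hj.symm⟩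
    have hex : ∀ j, ∃ k, x k ≠ ξ j k := by
      intro j
      by_contra hc; push_neg at hc
      exact hne j (funext hc)
    choose k hk using hex
    have hpI : (∏ j, (X (k j) - C (ξ j (k j))) ^ ((ω j).totalDegree + 1))
        ∈ Iσ n (∑ i, polyExp n (ω i) (ξ i)) := by
      intro q
      rw [LinearMap.sum_apply]
      apply Finset.sum_eq_zero
      intro j _
      apply polyExp_eq_zero
      intro α hα
      have heq : (∏ j, (X (k j) - C (ξ j (k j))) ^ ((ω j).totalDegree + 1)) * q
          = (X (k j) - C (ξ j (k j))) ^ ((ω j).totalDegree + 1) *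
            ((∏ m ∈ Finset.univ.erase j, (X (k m) - C (ξ m (k m))) ^ ((ω m).totalDegree + 1))
              * q) := by
        rw [← Finset.mul_prod_erase _ _ (Finset.mem_univ j), mul_assoc]
      rw [heq]
      exact coeff_blocker _ _ _ _ α (Nat.lt_succ_of_le hα)
    have h0 := hx _ hpI
    rw [map_prod] at h0
    obtain ⟨j, -, hj⟩ := Finset.prod_eq_zero_iff.mp h0
    simp only [map_pow, map_sub, eval_X, eval_C] at hj
    exact hk j (sub_eq_zero.mp (pow_eq_zero_iff (Nat.succ_ne_zero _) |>.mp hj))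
  · -- range ξ ⊆ V(I)
    rintro x ⟨i, rfl⟩
    intro p hp
    have hex : ∀ j, j ≠ i → ∃ kk, ξ j kk ≠ ξ i kk := by
      intro j hj
      by_contra hc; push_neg at hc
      exact hj (hξ (funext hc))
    choose c hc using hex
    set B : Fin r' → MvPolynomial (Fin n) ℂ := fun j =>
      if h : j = i then 1
      else (X (c j h) - C (ξ j (c j h))) ^ ((ω j).totalDegree + 1) with hB
    set u : MvPolynomial (Fin n) ℂ := ∏ j ∈ Finset.univ.erase i, B j with hu
    have key : ∀ v, polyExp n (ω i) (ξ i) ((p * u) * v) = 0 := by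
      intro v
      have h0 := hp (u * v)
      rw [LinearMap.sum_apply] at h0
      have hz : ∀ j ∈ (Finset.univ : Finset (Fin r')), j ≠ i →
          polyExp n (ω j) (ξ j) (p * (u * v)) = 0 := by
        intro j _ hji
        apply polyExp_eq_zero
        intro α hα
        have hjE : j ∈ Finset.univ.erase i := Finset.mem_erase.mpr ⟨hji, Finset.mem_univ j⟩
        have heq : p * (u * v)
            = (X (c j hji) - C (ξ j (c j hji))) ^ ((ω j).totalDegree + 1) *
              ((∏ m ∈ (Finset.univ.erase i).erase j, B m) * (p * v)) := by
          have hBj : B j = (X (c j hji) - C (ξ j (c j hji))) ^ ((ω j).totalDegree + 1) := by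
            simp only [hB, dif_neg hji]
          rw [hu, ← Finset.mul_prod_erase _ _ hjE, hBj]
          ring
        rw [heq]
        exact coeff_blocker _ _ _ _ α (Nat.lt_succ_of_le hα)
      rw [Finset.sum_eq_single_of_mem i (Finset.mem_univ i) hz] at h0
      rw [← mul_assoc] at h0
      exact h0
    have hev := extraction (ω i) (ξ i) (hω i) (p * u) key
    rw [map_mul] at hev
    have hu0 : eval (ξ i) u ≠ 0 := by
      rw [hu, map_prod]
      apply Finset.prod_ne_zero_iff.mpr
      intro j hj
      have hji : j ≠ i := (Finset.mem_erase.mp hj).1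
      simp only [hB, dif_neg hji, map_pow, map_sub, eval_X, eval_C]
      exact pow_ne_zero _ (sub_ne_zero.mpr (Ne.symm (hc j hji)))
    rcases mul_eq_zero.mp hev with h | h
    · exact h
    · exact absurd h hu0
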